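/- Deleting a definitely-proved literal from a strict rule body preserves consequences: Let D be a basic defeasible theory interpreted with separated reasoning, let r be a strict rule of D whose body contains the literal q, and suppose D ⊢ +Δq. Let D' be obtained from D by replacing r with the rule r' that is r with q deleted from its body. Then D ≡ D', i.e. D and D' have identical sets of consequences (including extended conclusions). -/

import Mathlib

/-- A propositional literal: an atom or its negation. -/
inductive Lit where
  | pos : ℕ → Lit
  | neg : ℕ → Lit
deriving DecidableEq

/-- The complement ~q of a literal q. -/
def Lit.compl : Lit → Lit
  | .pos n => .neg n
  | .neg n => .pos n

/-- The atom underlying a literal. -/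
def Lit.atom : Lit → ℕ
  | .pos n => n
  | .neg n => n

/-- The three kinds of rules: strict (→), defeasible (⇒), defeater (⇝). -/
inductive RuleKind where
  | strict | defeasible | defeater
deriving DecidableEq

/-- A rule: a finite body of literals, a head literal, and a kind. -/
structure Rule where
  body : Finset Lit
  head : Lit
  kind : RuleKind
deriving DecidableEq

/-- A propositional defeasible theory: finite facts, finite rules, and an
acyclic superiority relation on rules. -/
structure DTheory where
  facts : Finset Lit
  rules : Finset Rule
  sup : Rule → Rule → Prop
  sup_acyclic : ∀ r, ¬ Relation.TransGen sup r r

/-- Tagged literals (extended conclusions): tags ±Δ, ±∂, ±σ. -/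
inductive TaggedLit where
  | pDelta : Lit → TaggedLit
  | mDelta : Lit → TaggedLit
  | pPartial : Lit → TaggedLit
  | mPartial : Lit → TaggedLit
  | pSigma : Lit → TaggedLit
  | mSigma : Lit → TaggedLit
deriving DecidableEq

/-- The literal of a tagged literal. -/
def TaggedLit.lit : TaggedLit → Lit
  | .pDelta q => q
  | .mDelta q => q
  | .pPartial q => q
  | .mPartial q => q
  | .pSigma q => q
  | .mSigma q => q

/-- Tagged literals whose tag is among +Δ, −Δ, +∂, −∂ (conclusions proper). -/
def TaggedLit.IsConclusionTag : TaggedLit → Prop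
  | .pDelta _ => True
  | .mDelta _ => True
  | .pPartial _ => True
  | .mPartial _ => True
  | .pSigma _ => False
  | .mSigma _ => False

/-- R_s[q]: strict rules with head q. -/
def DTheory.Rs (D : DTheory) (q : Lit) : Set Rule :=
  {r | r ∈ D.rules ∧ r.kind = RuleKind.strict ∧ r.head = q}

/-- R_sd[q]: strict and defeasible rules with head q. -/
def DTheory.Rsd (D : DTheory) (q : Lit) : Set Rule :=
  {r | r ∈ D.rules ∧ r.kind ≠ RuleKind.defeater ∧ r.head = q}

/-- R_d[q]: defeasible rules with head q. -/
def DTheory.Rd (D : DTheory) (q : Lit) : Set Rule :=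
  {r | r ∈ D.rules ∧ r.kind = RuleKind.defeasible ∧ r.head = q}

/-- R[q]: all rules with head q. -/
def DTheory.Rall (D : DTheory) (q : Lit) : Set Rule :=
  {r | r ∈ D.rules ∧ r.head = q}

/-- The rules used for defeasible provability (tags ±∂, ±σ): under separated
reasoning (`sep = true`) these are the defeasible rules R_d[q]; under the
standard interpretation (`sep = false`) they are R_sd[q]. -/
def DTheory.RD (D : DTheory) (sep : Bool) (q : Lit) : Set Rule :=
  if sep then D.Rd q else D.Rsd q

/-- `Step sep D S c` holds iff the tagged literal `c` may be appended to a
derivation in `D` whose set of preceding lines is `S`, by one of the inference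
rules (±Δ, ±∂, ±σ).  `sep` selects separated reasoning. -/
inductive Step (sep : Bool) (D : DTheory) (S : Set TaggedLit) : TaggedLit → Prop
  | plusDelta (q : Lit) :
      (q ∈ D.facts ∨ ∃ r ∈ D.Rs q, ∀ a ∈ r.body, TaggedLit.pDelta a ∈ S) →
      Step sep D S (TaggedLit.pDelta q)
  | minusDelta (q : Lit) :
      q ∉ D.facts →
      (∀ r ∈ D.Rs q, ∃ a ∈ r.body, TaggedLit.mDelta a ∈ S) →
      Step sep D S (TaggedLit.mDelta q)
  | plusPartial (q : Lit) :
      (TaggedLit.pDelta q ∈ S ∨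
        ((∃ r ∈ D.RD sep q, ∀ a ∈ r.body, TaggedLit.pPartial a ∈ S) ∧
         TaggedLit.mDelta q.compl ∈ S ∧
         (∀ s ∈ D.Rall q.compl,
            (∃ a ∈ s.body, TaggedLit.mPartial a ∈ S) ∨
            (∃ t ∈ D.RD sep q, D.sup t s ∧ ∀ a ∈ t.body, TaggedLit.pPartial a ∈ S)))) →
      Step sep D S (TaggedLit.pPartial q)
  | minusPartial (q : Lit) :
      TaggedLit.mDelta q ∈ S →
      ((∀ r ∈ D.RD sep q, ∃ a ∈ r.body, TaggedLit.mPartial a ∈ S) ∨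
       TaggedLit.pDelta q.compl ∈ S ∨
       (∃ s ∈ D.Rall q.compl,
          (∀ a ∈ s.body, TaggedLit.pPartial a ∈ S) ∧
          (∀ t ∈ D.RD sep q,
             (∃ a ∈ t.body, TaggedLit.mPartial a ∈ S) ∨ ¬ D.sup t s))) →
      Step sep D S (TaggedLit.mPartial q)
  | plusSigma (q : Lit) :
      (∃ r ∈ D.RD sep q, ∀ a ∈ r.body, TaggedLit.pPartial a ∈ S) →
      Step sep D S (TaggedLit.pSigma q)
  | minusSigma (q : Lit) :
      (∀ r ∈ D.RD sep q, ∃ a ∈ r.body, TaggedLit.mPartial a ∈ S) →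
      Step sep D S (TaggedLit.mSigma q)

/-- Derivations: finite sequences of tagged literals, each justified by its
predecessors via the inference rules. -/
inductive IsDerivation (sep : Bool) (D : DTheory) : List TaggedLit → Prop
  | nil : IsDerivation sep D []
  | snoc (P : List TaggedLit) (c : TaggedLit) :
      IsDerivation sep D P → Step sep D {x | x ∈ P} c →
      IsDerivation sep D (P ++ [c])

/-- D ⊢ c : the tagged literal c occurs in some derivation in D. -/
def Proves (sep : Bool) (D : DTheory) (c : TaggedLit) : Prop :=
  ∃ P, IsDerivation sep D P ∧ c ∈ P

/-- A basic defeasible theory: no defeaters and an empty superiority relation. -/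
def DTheory.Basic (D : DTheory) : Prop :=
  (∀ r ∈ D.rules, r.kind ≠ RuleKind.defeater) ∧ (∀ r s : Rule, ¬ D.sup r s)

/-- D has duplicated strict rules: every strict rule has a defeasible copy. -/
def DTheory.DupStrictRules (D : DTheory) : Prop :=
  ∀ r ∈ D.rules, r.kind = RuleKind.strict →
    Rule.mk r.body r.head RuleKind.defeasible ∈ D.rules

/-- The literals of the (finite) language of D: all literals over atoms
occurring in D. -/
def DTheory.lits (D : DTheory) : Set Lit :=
  {l | (∃ f ∈ D.facts, f.atom = l.atom) ∨
       ∃ r ∈ D.rules, r.head.atom = l.atom ∨ ∃ a ∈ r.body, a.atom = l.atom}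

section Aux

open TaggedLit

variable {sep : Bool} {D : DTheory}

/-- The set of provable tagged literals. -/
def Prov (sep : Bool) (D : DTheory) : Set TaggedLit := {c | Proves sep D c}

theorem step_mono {S S' : Set TaggedLit} (h : S ⊆ S') {c} (hs : Step sep D S c) :
    Step sep D S' c := by
  cases hs with
  | plusDelta p h1 =>
    refine .plusDelta p ?_
    rcases h1 with h1 | ⟨s, hs, hb⟩
    · exact Or.inl h1
    · exact Or.inr ⟨s, hs, fun a ha => h (hb a ha)⟩
  | minusDelta p h1 h2 =>
    refine .minusDelta p h1 fun s hs => ?_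
    obtain ⟨a, ha, hm⟩ := h2 s hs
    exact ⟨a, ha, h hm⟩
  | plusPartial p h1 =>
    refine .plusPartial p ?_
    rcases h1 with h1 | ⟨⟨t, ht, htb⟩, hmc, hall⟩
    · exact Or.inl (h h1)
    · refine Or.inr ⟨⟨t, ht, fun a ha => h (htb a ha)⟩, h hmc, fun s hsm => ?_⟩
      rcases hall s hsm with ⟨a, ha, hma⟩ | ⟨t', ht', hsup, htb'⟩
      · exact Or.inl ⟨a, ha, h hma⟩
      · exact Or.inr ⟨t', ht', hsup, fun a ha => h (htb' a ha)⟩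
  | minusPartial p h0 h1 =>
    refine .minusPartial p (h h0) ?_
    rcases h1 with h1 | h1 | ⟨s, hsm, hsb, hts⟩
    · refine Or.inl fun t ht => ?_
      obtain ⟨a, ha, hma⟩ := h1 t ht
      exact ⟨a, ha, h hma⟩
    · exact Or.inr (Or.inl (h h1))
    · refine Or.inr (Or.inr ⟨s, hsm, fun a ha => h (hsb a ha), fun t ht => ?_⟩)
      rcases hts t ht with ⟨a, ha, hma⟩ | hns
      · exact Or.inl ⟨a, ha, h hma⟩
      · exact Or.inr hns
  | plusSigma p h1 =>
    obtain ⟨t, ht, htb⟩ := h1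
    exact .plusSigma p ⟨t, ht, fun a ha => h (htb a ha)⟩
  | minusSigma p h1 =>
    refine .minusSigma p fun t ht => ?_
    obtain ⟨a, ha, hma⟩ := h1 t ht
    exact ⟨a, ha, h hma⟩

theorem IsDerivation.append {P Q : List TaggedLit} (hP : IsDerivation sep D P)
    (hQ : IsDerivation sep D Q) : IsDerivation sep D (P ++ Q) := by
  induction hQ with
  | nil => simpa using hP
  | snoc Q c hQ hs ih =>
    rw [← List.append_assoc]
    exact .snoc _ c ih (step_mono (fun x hx => by simp at hx ⊢; exact Or.inr hx) hs)

theorem deriv_proves {P : List TaggedLit} (hP : IsDerivation sep D P) :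
    ∀ c ∈ P, Proves sep D c := fun c hc => ⟨P, hP, hc⟩

theorem finset_derivation (L : Finset TaggedLit) (h : ∀ x ∈ L, Proves sep D x) :
    ∃ P, IsDerivation sep D P ∧ ∀ x ∈ L, x ∈ P := by
  classical
  induction L using Finset.induction_on with
  | empty => exact ⟨[], .nil, by simp⟩
  | insert c L hc ih =>
    obtain ⟨P, hP, hm⟩ := ih (fun x hx => h x (Finset.mem_insert_of_mem hx))
    obtain ⟨Q, hQ, hcQ⟩ := h c (Finset.mem_insert_self c L)
    refine ⟨P ++ Q, hP.append hQ, fun x hx => ?_⟩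
    rcases Finset.mem_insert.mp hx with rfl | hx
    · simp [hcQ]
    · simp [hm x hx]

/-- Tags over a literal. -/
def tags6 (l : Lit) : Finset TaggedLit :=
  {pDelta l, mDelta l, pPartial l, mPartial l, pSigma l, mSigma l}

/-- Support of a step concluding `c`. -/
def supp (D : DTheory) (c : TaggedLit) : Finset TaggedLit :=
  (insert c.lit (insert c.lit.compl (D.rules.biUnion Rule.body))).biUnion tags6

theorem mem_supp_body {c : TaggedLit} {s : Rule} {a : Lit} (hs : s ∈ D.rules)
    (ha : a ∈ s.body) {x : TaggedLit} (hx : x ∈ tags6 a) : x ∈ supp D c := by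
  refine Finset.mem_biUnion.mpr ⟨a, ?_, hx⟩
  exact Finset.mem_insert_of_mem (Finset.mem_insert_of_mem
    (Finset.mem_biUnion.mpr ⟨s, hs, ha⟩))

theorem mem_supp_lit {c : TaggedLit} {x : TaggedLit} (hx : x ∈ tags6 c.lit) :
    x ∈ supp D c :=
  Finset.mem_biUnion.mpr ⟨c.lit, Finset.mem_insert_self _ _, hx⟩

theorem mem_supp_compl {c : TaggedLit} {x : TaggedLit} (hx : x ∈ tags6 c.lit.compl) :
    x ∈ supp D c :=
  Finset.mem_biUnion.mpr ⟨c.lit.compl,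
    Finset.mem_insert_of_mem (Finset.mem_insert_self _ _), hx⟩

theorem rules_of_RD {p : Lit} {s : Rule} (hs : s ∈ D.RD sep p) : s ∈ D.rules := by
  unfold DTheory.RD DTheory.Rd DTheory.Rsd at hs
  split at hs <;> exact hs.1

theorem rules_of_Rall {p : Lit} {s : Rule} (hs : s ∈ D.Rall p) : s ∈ D.rules := hs.1

theorem rules_of_Rs {p : Lit} {s : Rule} (hs : s ∈ D.Rs p) : s ∈ D.rules := hs.1

theorem step_restrict {S : Set TaggedLit} {c : TaggedLit} (hs : Step sep D S c) :
    Step sep D {x | x ∈ S ∧ x ∈ supp D c} c := by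
  cases hs with
  | plusDelta p h1 =>
    refine .plusDelta p ?_
    rcases h1 with h1 | ⟨s, hsm, hb⟩
    · exact Or.inl h1
    · exact Or.inr ⟨s, hsm, fun a ha =>
        ⟨hb a ha, mem_supp_body (rules_of_Rs hsm) ha (by simp [tags6])⟩⟩
  | minusDelta p h1 h2 =>
    refine .minusDelta p h1 fun s hsm => ?_
    obtain ⟨a, ha, hm⟩ := h2 s hsm
    exact ⟨a, ha, hm, mem_supp_body (rules_of_Rs hsm) ha (by simp [tags6])⟩
  | plusPartial p h1 =>
    refine .plusPartial p ?_
    rcases h1 with h1 | ⟨⟨t, ht, htb⟩, hmc, hall⟩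
    · exact Or.inl ⟨h1, mem_supp_lit (by simp [tags6, TaggedLit.lit])⟩
    · refine Or.inr ⟨⟨t, ht, fun a ha =>
        ⟨htb a ha, mem_supp_body (rules_of_RD ht) ha (by simp [tags6])⟩⟩,
        ⟨hmc, mem_supp_compl (by simp [tags6, TaggedLit.lit])⟩, fun s hsm => ?_⟩
      rcases hall s hsm with ⟨a, ha, hma⟩ | ⟨t', ht', hsup, htb'⟩
      · exact Or.inl ⟨a, ha, hma, mem_supp_body (rules_of_Rall hsm) ha (by simp [tags6])⟩
      · exact Or.inr ⟨t', ht', hsup, fun a ha =>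
          ⟨htb' a ha, mem_supp_body (rules_of_RD ht') ha (by simp [tags6])⟩⟩
  | minusPartial p h0 h1 =>
    refine .minusPartial p ⟨h0, mem_supp_lit (by simp [tags6, TaggedLit.lit])⟩ ?_
    rcases h1 with h1 | h1 | ⟨s, hsm, hsb, hts⟩
    · refine Or.inl fun t ht => ?_
      obtain ⟨a, ha, hma⟩ := h1 t ht
      exact ⟨a, ha, hma, mem_supp_body (rules_of_RD ht) ha (by simp [tags6])⟩
    · exact Or.inr (Or.inl ⟨h1, mem_supp_compl (by simp [tags6, TaggedLit.lit])⟩)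
    · refine Or.inr (Or.inr ⟨s, hsm, fun a ha =>
        ⟨hsb a ha, mem_supp_body (rules_of_Rall hsm) ha (by simp [tags6])⟩,
        fun t ht => ?_⟩)
      rcases hts t ht with ⟨a, ha, hma⟩ | hns
      · exact Or.inl ⟨a, ha, hma, mem_supp_body (rules_of_RD ht) ha (by simp [tags6])⟩
      · exact Or.inr hns
  | plusSigma p h1 =>
    obtain ⟨t, ht, htb⟩ := h1
    exact .plusSigma p ⟨t, ht, fun a ha =>
      ⟨htb a ha, mem_supp_body (rules_of_RD ht) ha (by simp [tags6])⟩⟩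
  | minusSigma p h1 =>
    refine .minusSigma p fun t ht => ?_
    obtain ⟨a, ha, hma⟩ := h1 t ht
    exact ⟨a, ha, hma, mem_supp_body (rules_of_RD ht) ha (by simp [tags6])⟩

theorem step_proves {c : TaggedLit} (h : Step sep D (Prov sep D) c) :
    Proves sep D c := by
  classical
  have h2 := step_restrict h
  obtain ⟨P, hP, hmem⟩ := finset_derivation
    ((supp D c).filter (fun x => x ∈ Prov sep D))
    (fun x hx => (Finset.mem_filter.mp hx).2)
  have h3 : Step sep D {x | x ∈ P} c :=
    step_mono (fun x hx => hmem x (Finset.mem_filter.mpr ⟨hx.2, hx.1⟩)) h2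
  exact ⟨P ++ [c], .snoc P c hP h3, by simp⟩

theorem proves_step {c : TaggedLit} (h : Proves sep D c) :
    Step sep D (Prov sep D) c := by
  obtain ⟨P, hP, hc⟩ := h
  induction hP with
  | nil => simp at hc
  | snoc P c' hP hs ih =>
    rw [List.mem_append] at hc
    rcases hc with hc | hc
    · exact ih hc
    · simp only [List.mem_singleton] at hc
      subst hc
      exact step_mono (fun x hx => deriv_proves hP x hx) hs

theorem delta_coherent_aux {P : List TaggedLit} (hP : IsDerivation sep D P) :
    ∀ l, pDelta l ∈ P → ¬ Proves sep D (mDelta l) := by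
  induction hP with
  | nil => simp
  | snoc P c hP hs ih =>
    intro l hl hm
    rw [List.mem_append] at hl
    rcases hl with hl | hl
    · exact ih l hl hm
    · simp only [List.mem_singleton] at hl
      subst hl
      cases hs with
      | plusDelta _ h1 =>
        have hstep := proves_step hm
        cases hstep with
        | minusDelta _ hnf hall =>
          rcases h1 with hf | ⟨s, hsm, hb⟩
          · exact hnf hf
          · obtain ⟨a, ha, hma⟩ := hall s hsm
            exact ih a (hb a ha) hma

theorem delta_coherent {l : Lit} (hp : Proves sep D (pDelta l)) :
    ¬ Proves sep D (mDelta l) := by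
  obtain ⟨P, hP, hc⟩ := hp
  exact delta_coherent_aux hP l hc

end Aux

section Main

open TaggedLit

/-- The modified theory: `r` replaced by `r` with `q` erased from its body. -/
def erTh (D : DTheory) (r : Rule) (q : Lit) : DTheory :=
  ⟨D.facts, insert (Rule.mk (r.body.erase q) r.head r.kind) (D.rules.erase r),
   D.sup, D.sup_acyclic⟩

variable {D : DTheory} {r : Rule} {q : Lit}

theorem mem_erTh_rules {s : Rule} :
    s ∈ (erTh D r q).rules ↔
      s = Rule.mk (r.body.erase q) r.head r.kind ∨ (s ∈ D.rules ∧ s ≠ r) := by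
  simp only [erTh, Finset.mem_insert, Finset.mem_erase]
  tauto

theorem RD_true (E : DTheory) (p : Lit) : E.RD true p = E.Rd p := rfl

theorem Rd_erTh (hk : r.kind = RuleKind.strict) (p : Lit) :
    (erTh D r q).Rd p = D.Rd p := by
  ext s
  simp only [DTheory.Rd, Set.mem_setOf_eq, mem_erTh_rules]
  constructor
  · rintro ⟨(rfl | ⟨hs, _⟩), hkd, hh⟩
    · exact absurd hkd (by simp [hk])
    · exact ⟨hs, hkd, hh⟩
  · rintro ⟨hs, hkd, hh⟩
    refine ⟨Or.inr ⟨hs, ?_⟩, hkd, hh⟩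
    rintro rfl
    rw [hk] at hkd
    exact absurd hkd (by decide)

theorem dir1 (hBasic : D.Basic) (hr : r ∈ D.rules) (hk : r.kind = RuleKind.strict)
    (hq : q ∈ r.body) (hprov : Proves true D (pDelta q)) :
    ∀ c, Proves true D c → Proves true (erTh D r q) c := by
  have hmq : ¬ Proves true D (mDelta q) := delta_coherent hprov
  have hmpq : ¬ Proves true D (mPartial q) := by
    intro h
    cases proves_step h with
    | minusPartial _ h0 _ => exact hmq h0
  suffices key : ∀ P, IsDerivation true D P → ∀ x ∈ P, Proves true (erTh D r q) x by
    intro c hc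
    obtain ⟨P, hP, hcP⟩ := hc
    exact key P hP c hcP
  intro P hP
  induction hP with
  | nil => simp
  | snoc P c' hPd hs ih =>
    intro x hx
    rw [List.mem_append] at hx
    rcases hx with hx | hx
    · exact ih x hx
    · simp only [List.mem_singleton] at hx; subst hx
      have hS2 : {y : TaggedLit | y ∈ P} ⊆ Prov true (erTh D r q) := fun y hy => ih y hy
      have hS1 : {y : TaggedLit | y ∈ P} ⊆ Prov true D := fun y hy => deriv_proves hPd y hy
      apply step_proves
      cases hs with
      | plusDelta p h1 =>
        refine .plusDelta p ?_
        rcases h1 with h1 | ⟨s, ⟨hsR, hsk, hsh⟩, hb⟩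
        · exact Or.inl h1
        · by_cases hsr : s = r
          · subst hsr
            exact Or.inr ⟨Rule.mk (s.body.erase q) s.head s.kind,
              ⟨mem_erTh_rules.mpr (Or.inl rfl), hk, hsh⟩,
              fun a ha => hS2 (hb a (Finset.mem_of_mem_erase ha))⟩
          · exact Or.inr ⟨s, ⟨mem_erTh_rules.mpr (Or.inr ⟨hsR, hsr⟩), hsk, hsh⟩,
              fun a ha => hS2 (hb a ha)⟩
      | minusDelta p hnf hall =>
        refine .minusDelta p hnf fun s hsm => ?_
        obtain ⟨hsR2, hsk, hsh⟩ := hsm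
        rcases mem_erTh_rules.mp hsR2 with rfl | ⟨hsR, hsr⟩
        · obtain ⟨a, ha, hma⟩ := hall r ⟨hr, hk, hsh⟩
          have haq : a ≠ q := by rintro rfl; exact hmq (hS1 hma)
          exact ⟨a, Finset.mem_erase.mpr ⟨haq, ha⟩, hS2 hma⟩
        · obtain ⟨a, ha, hma⟩ := hall s ⟨hsR, hsk, hsh⟩
          exact ⟨a, ha, hS2 hma⟩
      | plusPartial p h1 =>
        refine .plusPartial p ?_
        rcases h1 with h1 | ⟨⟨t, ht, htb⟩, hmc, hall⟩
        · exact Or.inl (hS2 h1)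
        · refine Or.inr ⟨⟨t, ?_, fun a ha => hS2 (htb a ha)⟩, hS2 hmc, fun s hsm => ?_⟩
          · rw [RD_true, Rd_erTh hk]
            rw [RD_true] at ht
            exact ht
          · obtain ⟨hsR2, hsh⟩ := hsm
            rcases mem_erTh_rules.mp hsR2 with rfl | ⟨hsR, hsr⟩
            · rcases hall r ⟨hr, hsh⟩ with ⟨a, ha, hma⟩ | ⟨t', _, hsup, _⟩
              · have haq : a ≠ q := by rintro rfl; exact hmpq (hS1 hma)
                exact Or.inl ⟨a, Finset.mem_erase.mpr ⟨haq, ha⟩, hS2 hma⟩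
              · exact absurd hsup (hBasic.2 t' r)
            · rcases hall s ⟨hsR, hsh⟩ with ⟨a, ha, hma⟩ | ⟨t', _, hsup, _⟩
              · exact Or.inl ⟨a, ha, hS2 hma⟩
              · exact absurd hsup (hBasic.2 t' s)
      | minusPartial p h0 h1 =>
        refine .minusPartial p (hS2 h0) ?_
        rcases h1 with h1 | h1 | ⟨s, ⟨hsR, hsh⟩, hsb, _⟩
        · refine Or.inl fun t ht => ?_
          rw [RD_true, Rd_erTh hk] at ht
          obtain ⟨a, ha, hma⟩ := h1 t (by rw [RD_true]; exact ht)
          exact ⟨a, ha, hS2 hma⟩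
        · exact Or.inr (Or.inl (hS2 h1))
        · by_cases hsr : s = r
          · subst hsr
            exact Or.inr (Or.inr ⟨Rule.mk (s.body.erase q) s.head s.kind,
              ⟨mem_erTh_rules.mpr (Or.inl rfl), hsh⟩,
              fun a ha => hS2 (hsb a (Finset.mem_of_mem_erase ha)),
              fun t _ => Or.inr (hBasic.2 t _)⟩)
          · exact Or.inr (Or.inr ⟨s, ⟨mem_erTh_rules.mpr (Or.inr ⟨hsR, hsr⟩), hsh⟩,
              fun a ha => hS2 (hsb a ha), fun t _ => Or.inr (hBasic.2 t _)⟩)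
      | plusSigma p h1 =>
        obtain ⟨t, ht, htb⟩ := h1
        refine .plusSigma p ⟨t, ?_, fun a ha => hS2 (htb a ha)⟩
        rw [RD_true, Rd_erTh hk]
        rw [RD_true] at ht
        exact ht
      | minusSigma p h1 =>
        refine .minusSigma p fun t ht => ?_
        rw [RD_true, Rd_erTh hk] at ht
        obtain ⟨a, ha, hma⟩ := h1 t (by rw [RD_true]; exact ht)
        exact ⟨a, ha, hS2 hma⟩

theorem dir2 (hBasic : D.Basic) (hr : r ∈ D.rules) (hk : r.kind = RuleKind.strict)
    (hq : q ∈ r.body) (hprov : Proves true D (pDelta q)) :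
    ∀ c, Proves true (erTh D r q) c → Proves true D c := by
  have hppq : Proves true D (pPartial q) := step_proves (.plusPartial q (Or.inl hprov))
  suffices key : ∀ P, IsDerivation true (erTh D r q) P → ∀ x ∈ P, Proves true D x by
    intro c hc
    obtain ⟨P, hP, hcP⟩ := hc
    exact key P hP c hcP
  intro P hP
  induction hP with
  | nil => simp
  | snoc P c' hPd hs ih =>
    intro x hx
    rw [List.mem_append] at hx
    rcases hx with hx | hx
    · exact ih x hx
    · simp only [List.mem_singleton] at hx; subst hx
      have hS2 : {y : TaggedLit | y ∈ P} ⊆ Prov true D := fun y hy => ih y hy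
      apply step_proves
      cases hs with
      | plusDelta p h1 =>
        refine .plusDelta p ?_
        rcases h1 with h1 | ⟨s, ⟨hsR2, hsk, hsh⟩, hb⟩
        · exact Or.inl h1
        · rcases mem_erTh_rules.mp hsR2 with rfl | ⟨hsR, _⟩
          · refine Or.inr ⟨r, ⟨hr, hk, hsh⟩, fun a ha => ?_⟩
            by_cases haq : a = q
            · subst haq; exact hprov
            · exact hS2 (hb a (Finset.mem_erase.mpr ⟨haq, ha⟩))
          · exact Or.inr ⟨s, ⟨hsR, hsk, hsh⟩, fun a ha => hS2 (hb a ha)⟩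
      | minusDelta p hnf hall =>
        refine .minusDelta p hnf fun s hsm => ?_
        obtain ⟨hsR, hsk, hsh⟩ := hsm
        by_cases hsr : s = r
        · subst hsr
          obtain ⟨a, ha, hma⟩ := hall (Rule.mk (s.body.erase q) s.head s.kind)
            ⟨mem_erTh_rules.mpr (Or.inl rfl), hk, hsh⟩
          exact ⟨a, Finset.mem_of_mem_erase ha, hS2 hma⟩
        · obtain ⟨a, ha, hma⟩ := hall s ⟨mem_erTh_rules.mpr (Or.inr ⟨hsR, hsr⟩), hsk, hsh⟩
          exact ⟨a, ha, hS2 hma⟩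
      | plusPartial p h1 =>
        refine .plusPartial p ?_
        rcases h1 with h1 | ⟨⟨t, ht, htb⟩, hmc, hall⟩
        · exact Or.inl (hS2 h1)
        · refine Or.inr ⟨⟨t, ?_, fun a ha => hS2 (htb a ha)⟩, hS2 hmc, fun s hsm => ?_⟩
          · rw [RD_true]
            rw [RD_true, Rd_erTh hk] at ht
            exact ht
          · obtain ⟨hsR, hsh⟩ := hsm
            by_cases hsr : s = r
            · subst hsr
              rcases hall (Rule.mk (s.body.erase q) s.head s.kind)
                  ⟨mem_erTh_rules.mpr (Or.inl rfl), hsh⟩ with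
                ⟨a, ha, hma⟩ | ⟨t', _, hsup, _⟩
              · exact Or.inl ⟨a, Finset.mem_of_mem_erase ha, hS2 hma⟩
              · exact absurd hsup (hBasic.2 t' _)
            · rcases hall s ⟨mem_erTh_rules.mpr (Or.inr ⟨hsR, hsr⟩), hsh⟩ with
                ⟨a, ha, hma⟩ | ⟨t', _, hsup, _⟩
              · exact Or.inl ⟨a, ha, hS2 hma⟩
              · exact absurd hsup (hBasic.2 t' s)
      | minusPartial p h0 h1 =>
        refine .minusPartial p (hS2 h0) ?_
        rcases h1 with h1 | h1 | ⟨s, ⟨hsR2, hsh⟩, hsb, _⟩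
        · refine Or.inl fun t ht => ?_
          rw [RD_true] at ht
          obtain ⟨a, ha, hma⟩ := h1 t (by rw [RD_true, Rd_erTh hk]; exact ht)
          exact ⟨a, ha, hS2 hma⟩
        · exact Or.inr (Or.inl (hS2 h1))
        · rcases mem_erTh_rules.mp hsR2 with rfl | ⟨hsR, _⟩
          · refine Or.inr (Or.inr ⟨r, ⟨hr, hsh⟩, fun a ha => ?_,
              fun t _ => Or.inr (hBasic.2 t r)⟩)
            by_cases haq : a = q
            · subst haq; exact hppq
            · exact hS2 (hsb a (Finset.mem_erase.mpr ⟨haq, ha⟩))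
          · exact Or.inr (Or.inr ⟨s, ⟨hsR, hsh⟩, fun a ha => hS2 (hsb a ha),
              fun t _ => Or.inr (hBasic.2 t s)⟩)
      | plusSigma p h1 =>
        obtain ⟨t, ht, htb⟩ := h1
        refine .plusSigma p ⟨t, ?_, fun a ha => hS2 (htb a ha)⟩
        rw [RD_true]
        rw [RD_true, Rd_erTh hk] at ht
        exact ht
      | minusSigma p h1 =>
        refine .minusSigma p fun t ht => ?_
        rw [RD_true] at ht
        obtain ⟨a, ha, hma⟩ := h1 t (by rw [RD_true, Rd_erTh hk]; exact ht)
        exact ⟨a, ha, hS2 hma⟩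

end Main

/-- deleting a definitely-proved literal q from the body of a
strict rule r of a basic defeasible theory D (separated reasoning) preserves
all consequences (including extended conclusions). -/
theorem delete_proved_lit_strict (D : DTheory) (r : Rule) (q : Lit)
    (hBasic : D.Basic) (hr : r ∈ D.rules) (hk : r.kind = RuleKind.strict)
    (hq : q ∈ r.body)
    (hprov : Proves true D (TaggedLit.pDelta q)) :
    ∀ c : TaggedLit,
      Proves true D c ↔
      Proves true
        ⟨D.facts,
         insert (Rule.mk (r.body.erase q) r.head r.kind) (D.rules.erase r),
         D.sup, D.sup_acyclic⟩ c := by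
  intro c
  exact ⟨fun h => dir1 hBasic hr hk hq hprov c h, fun h => dir2 hBasic hr hk hq hprov c h⟩
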